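/- Let A be a real hyperplane arrangement in R^d given by affine-linear forms ℓ_0, ..., ℓ_n with real coefficients, such that A is essential and has no flats at infinity, and suppose for every u in the open positive orthant R_+^{n+1} the critical set Crit_X(u) consists of exactly r = (-1)^d χ(X) reduced points. Then the logarithmic discriminant variety ∇_log(X) contains no point of the open positive orthant; i.e., ∇_log(X) ∩ R_+^{n+1} = ∅. -/

import Mathlib

open Matrix

open Filter Topology

open Filter Topology

section aux
variable {d n : ℕ} {A : Matrix (Fin (n+1)) (Fin d) ℝ} {b : Fin (n+1) → ℝ}
  {ℓ : (Fin d → ℂ) → Fin (n+1) → ℂ}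

lemma lcont (hℓ : ∀ x i, ℓ x i = (∑ j, (A i j : ℂ) * x j) + (b i : ℂ)) (i : Fin (n+1)) :
    Continuous fun x : Fin d → ℂ => ℓ x i := by
  have h : (fun x : Fin d → ℂ => ℓ x i) = fun x => (∑ j, (A i j : ℂ) * x j) + (b i : ℂ) :=
    funext fun x => hℓ x i
  rw [h]
  exact (continuous_finset_sum _ fun j _ => (continuous_const.mul (continuous_apply j))).add
    continuous_const

lemma ldiff (hℓ : ∀ x i, ℓ x i = (∑ j, (A i j : ℂ) * x j) + (b i : ℂ)) (p q : Fin d → ℂ)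
    (i : Fin (n+1)) : ℓ q i - ℓ p i = ∑ k, (A i k : ℂ) * (q k - p k) := by
  rw [hℓ, hℓ, add_sub_add_right_eq_sub, ← Finset.sum_sub_distrib]
  exact Finset.sum_congr rfl fun k _ => by ring

lemma star (hℓ : ∀ x i, ℓ x i = (∑ j, (A i j : ℂ) * x j) + (b i : ℂ))
    (u' : Fin (n+1) → ℂ) (x : Fin d → ℂ) (hx : ∀ i, ℓ x i ≠ 0)
    (hc : ∀ j, ∑ i, u' i * (A i j : ℂ) / ℓ x i = 0) (z : Fin d → ℂ) :
    ∑ i, u' i * ℓ z i / ℓ x i = ∑ i, u' i := by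
  have base : ∀ z : Fin d → ℂ,
      ∑ i, u' i * ℓ z i / ℓ x i = ∑ i, u' i * (b i : ℂ) / ℓ x i := by
    intro z
    have h1 : ∀ i, u' i * ℓ z i / ℓ x i
        = (∑ j, z j * (u' i * (A i j : ℂ) / ℓ x i)) + u' i * (b i : ℂ) / ℓ x i := by
      intro i
      rw [hℓ, mul_add, add_div, Finset.mul_sum, Finset.sum_div]
      congr 1
      exact Finset.sum_congr rfl fun j _ => by ring
    rw [Finset.sum_congr rfl fun i _ => h1 i, Finset.sum_add_distrib]
    rw [Finset.sum_comm]
    have : ∀ j : Fin d, ∑ i, z j * (u' i * (A i j : ℂ) / ℓ x i) = 0 := by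
      intro j
      rw [← Finset.mul_sum, hc j, mul_zero]
    rw [Finset.sum_congr rfl fun j _ => this j, Finset.sum_const_zero, zero_add]
  have hx2 : ∑ i, u' i * ℓ x i / ℓ x i = ∑ i, u' i :=
    Finset.sum_congr rfl fun i _ => by rw [mul_div_assoc, div_self (hx i), mul_one]
  rw [base z, ← base x, hx2]

lemma diffid (hℓ : ∀ x i, ℓ x i = (∑ j, (A i j : ℂ) * x j) + (b i : ℂ))
    (u' : Fin (n+1) → ℂ) (p q : Fin d → ℂ) (hp : ∀ i, ℓ p i ≠ 0) (hq : ∀ i, ℓ q i ≠ 0)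
    (hcp : ∀ j, ∑ i, u' i * (A i j : ℂ) / ℓ p i = 0)
    (hcq : ∀ j, ∑ i, u' i * (A i j : ℂ) / ℓ q i = 0) (j : Fin d) :
    ∑ i, u' i * (A i j : ℂ) * (∑ k, (A i k : ℂ) * (q k - p k)) / (ℓ p i * ℓ q i) = 0 := by
  have h1 : ∀ i, u' i * (A i j : ℂ) * (∑ k, (A i k : ℂ) * (q k - p k)) / (ℓ p i * ℓ q i)
      = u' i * (A i j : ℂ) / ℓ p i - u' i * (A i j : ℂ) / ℓ q i := by
    intro i
    rw [← ldiff hℓ, div_sub_div _ _ (hp i) (hq i)]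
    congr 1
    ring
  rw [Finset.sum_congr rfl fun i _ => h1 i, Finset.sum_sub_distrib, hcp j, hcq j, sub_zero]

variable {d n : ℕ} {A : Matrix (Fin (n+1)) (Fin d) ℝ} {b : Fin (n+1) → ℝ}
  {ℓ : (Fin d → ℂ) → Fin (n+1) → ℂ}

-- accumulation point of critical set is degenerate
lemma acc_degenerate (hℓ : ∀ x i, ℓ x i = (∑ j, (A i j : ℂ) * x j) + (b i : ℂ))
    (u' : Fin (n+1) → ℂ) (x₀ : Fin d → ℂ) (hx0 : ∀ i, ℓ x₀ i ≠ 0)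
    (hc0 : ∀ j, ∑ i, u' i * (A i j : ℂ) / ℓ x₀ i = 0)
    (z : ℕ → Fin d → ℂ) (hzX : ∀ m i, ℓ (z m) i ≠ 0)
    (hzc : ∀ m j, ∑ i, u' i * (A i j : ℂ) / ℓ (z m) i = 0)
    (hne : ∀ m, z m ≠ x₀) (hlim : Tendsto z atTop (𝓝 x₀)) :
    (Matrix.of fun j k : Fin d => ∑ i, u' i * (A i j : ℂ) * (A i k : ℂ) / (ℓ x₀ i)^2).det
      = 0 := by
  classical
  -- unit directions
  set dm : ℕ → Fin d → ℂ := fun m => (‖z m - x₀‖ : ℂ)⁻¹ • (z m - x₀) with hdm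
  have hzx : ∀ m, z m - x₀ ≠ 0 := fun m => sub_ne_zero.mpr (hne m)
  have hnorm_pos : ∀ m, (0:ℝ) < ‖z m - x₀‖ := fun m => norm_pos_iff.mpr (hzx m)
  have hdm_norm : ∀ m, ‖dm m‖ = 1 := by
    intro m
    rw [hdm]
    simp only [norm_smul, norm_inv, Complex.norm_real]
    rw [Real.norm_eq_abs, abs_of_pos (hnorm_pos m)]
    exact inv_mul_cancel₀ (hnorm_pos m).ne'
  have hsph : ∀ m, dm m ∈ Metric.sphere (0 : Fin d → ℂ) 1 := by
    intro m; simpa [Metric.mem_sphere, dist_zero_right] using hdm_norm m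
  obtain ⟨w, hw_mem, ψ, hψ, hwlim⟩ := (isCompact_sphere (0 : Fin d → ℂ) 1).tendsto_subseq hsph
  have hw_ne : w ≠ 0 := by
    intro h
    rw [h] at hw_mem
    simp at hw_mem
  -- exact identity at each m
  have Em : ∀ m (j : Fin d),
      ∑ i, u' i * (A i j : ℂ) * (∑ k, (A i k : ℂ) * dm m k) / (ℓ (z m) i * ℓ x₀ i) = 0 := by
    intro m j
    have h0 := diffid hℓ u' (z m) x₀ (hzX m) hx0 (hzc m) hc0 j
    have hc : (‖z m - x₀‖ : ℂ) ≠ 0 := by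
      simpa using (hnorm_pos m).ne'
    have hfac : ∀ i, (∑ k, (A i k : ℂ) * (x₀ k - z m k))
        = -(‖z m - x₀‖ : ℂ) * ∑ k, (A i k : ℂ) * dm m k := by
      intro i
      rw [Finset.mul_sum]
      refine Finset.sum_congr rfl fun k _ => ?_
      rw [hdm]
      simp only [Pi.smul_apply, Pi.sub_apply, smul_eq_mul]
      field_simp
      ring
    rw [Finset.sum_congr rfl (fun i _ => by rw [hfac i]) ] at h0
    have h1 : ∑ i, u' i * (A i j : ℂ) * (-(‖z m - x₀‖ : ℂ) * ∑ k, (A i k : ℂ) * dm m k)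
        / (ℓ (z m) i * ℓ x₀ i)
        = -(‖z m - x₀‖ : ℂ) *
          ∑ i, u' i * (A i j : ℂ) * (∑ k, (A i k : ℂ) * dm m k) / (ℓ (z m) i * ℓ x₀ i) := by
      rw [Finset.mul_sum]
      exact Finset.sum_congr rfl fun i _ => by ring
    rw [h1] at h0
    rcases mul_eq_zero.mp h0 with h | h
    · exact absurd h (by simpa using hc)
    · exact h
  -- pass to the limit along ψ
  have key : ∀ j : Fin d,
      ∑ i, u' i * (A i j : ℂ) * (∑ k, (A i k : ℂ) * w k) / (ℓ x₀ i * ℓ x₀ i) = 0 := by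
    intro j
    have hterm : ∀ i : Fin (n+1), Tendsto
        (fun m => u' i * (A i j : ℂ) * (∑ k, (A i k : ℂ) * dm (ψ m) k)
          / (ℓ (z (ψ m)) i * ℓ x₀ i)) atTop
        (𝓝 (u' i * (A i j : ℂ) * (∑ k, (A i k : ℂ) * w k) / (ℓ x₀ i * ℓ x₀ i))) := by
      intro i
      have hz' : Tendsto (fun m => ℓ (z (ψ m)) i) atTop (𝓝 (ℓ x₀ i)) :=
        ((lcont hℓ i).continuousAt.tendsto).comp (hlim.comp hψ.tendsto_atTop)
      have hd' : ∀ k, Tendsto (fun m => dm (ψ m) k) atTop (𝓝 (w k)) := by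
        intro k
        exact (tendsto_pi_nhds.mp hwlim) k
      have hnum : Tendsto (fun m => u' i * (A i j : ℂ) * (∑ k, (A i k : ℂ) * dm (ψ m) k))
          atTop (𝓝 (u' i * (A i j : ℂ) * (∑ k, (A i k : ℂ) * w k))) :=
        tendsto_const_nhds.mul (tendsto_finset_sum _ fun k _ => tendsto_const_nhds.mul (hd' k))
      exact hnum.div (hz'.mul tendsto_const_nhds) (mul_ne_zero (hx0 i) (hx0 i))
    have hsum := tendsto_finset_sum Finset.univ fun i _ => hterm i
    have heq : (fun m => ∑ i, u' i * (A i j : ℂ) *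
        (∑ k, (A i k : ℂ) * dm (ψ m) k) / (ℓ (z (ψ m)) i * ℓ x₀ i)) = fun _ => (0:ℂ) :=
      funext fun m => Em (ψ m) j
    rw [heq] at hsum
    exact (tendsto_nhds_unique hsum tendsto_const_nhds)
  -- matrix has nontrivial kernel
  have hmv : (Matrix.of fun j k : Fin d =>
      ∑ i, u' i * (A i j : ℂ) * (A i k : ℂ) / (ℓ x₀ i)^2).mulVec w = 0 := by
    funext j
    show ∑ k, (∑ i, u' i * (A i j : ℂ) * (A i k : ℂ) / (ℓ x₀ i)^2) * w k = 0
    simp only [Finset.sum_mul]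
    rw [Finset.sum_comm]
    have hswap : ∀ i : Fin (n+1), ∑ k, (u' i * (A i j : ℂ) * (A i k : ℂ) / (ℓ x₀ i)^2) * w k
        = u' i * (A i j : ℂ) * (∑ k, (A i k : ℂ) * w k) / (ℓ x₀ i * ℓ x₀ i) := by
      intro i
      rw [Finset.mul_sum, Finset.sum_div]
      exact Finset.sum_congr rfl fun k _ => by ring
    rw [Finset.sum_congr rfl fun i _ => hswap i]
    exact key j
  exact Matrix.exists_mulVec_eq_zero_iff.mp ⟨w, hw_ne, hmv⟩


lemma escape_inf (hℓ : ∀ x i, ℓ x i = (∑ j, (A i j : ℂ) * x j) + (b i : ℂ))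
    (hflats : ∀ I : Finset (Fin (n+1)),
      (∃ v : Fin d → ℂ, v ≠ 0 ∧ ∀ i ∈ I, ∑ j, (A i j : ℂ) * v j = 0) →
      ∃ x : Fin d → ℂ, ∀ i ∈ I, ℓ x i = 0)
    (u : Fin (n+1) → ℝ) (hu : ∀ i, 0 < u i)
    (w : ℕ → Fin (n+1) → ℂ) (hw : Tendsto w atTop (𝓝 fun i => (u i : ℂ)))
    (x : ℕ → Fin d → ℂ) (hxX : ∀ m i, ℓ (x m) i ≠ 0)
    (hxc : ∀ m j, ∑ i, w m i * (A i j : ℂ) / ℓ (x m) i = 0)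
    (hxn : Tendsto (fun m => ‖x m‖) atTop atTop) : False := by
  classical
  set ρ : ℕ → ℝ := fun m => max ‖x m‖ 1 with hρ
  have hρpos : ∀ m, (0:ℝ) < ρ m := fun m => lt_of_lt_of_le one_pos (le_max_right _ _)
  have hρtop : Tendsto ρ atTop atTop := tendsto_atTop_mono (fun m => le_max_left _ _) hxn
  set v : ℕ → Fin d → ℂ := fun m => ((ρ m : ℂ))⁻¹ • x m with hv
  have hxv : ∀ m, x m = (ρ m : ℂ) • v m := by
    intro m
    rw [hv]
    simp only
    rw [smul_smul, mul_inv_cancel₀ (by exact_mod_cast (hρpos m).ne'), one_smul]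
  have hvball : ∀ m, v m ∈ Metric.closedBall (0 : Fin d → ℂ) 1 := by
    intro m
    rw [Metric.mem_closedBall, dist_zero_right, hv]
    simp only [norm_smul, norm_inv, Complex.norm_real, Real.norm_eq_abs,
      abs_of_pos (hρpos m)]
    rw [inv_mul_le_iff₀ (hρpos m), mul_one]
    exact le_max_left _ _
  obtain ⟨vb, hvb_mem, ψ, hψ, hvlim⟩ :=
    (isCompact_closedBall (0 : Fin d → ℂ) 1).tendsto_subseq hvball
  -- the limit direction has norm 1
  have hvbnorm : ‖vb‖ = 1 := by
    have h1 : Tendsto (fun m => ‖v (ψ m)‖) atTop (𝓝 ‖vb‖) := hvlim.norm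
    have h2 : Tendsto (fun m => ‖v (ψ m)‖) atTop (𝓝 1) := by
      have hev : ∀ᶠ m in atTop, ‖v (ψ m)‖ = 1 := by
        have hev0 : ∀ᶠ m in atTop, (1:ℝ) ≤ ‖x m‖ := hxn.eventually_ge_atTop 1
        obtain ⟨N, hN⟩ := eventually_atTop.mp hev0
        refine eventually_atTop.mpr ⟨N, fun m hm => ?_⟩
        have hxm : (1:ℝ) ≤ ‖x (ψ m)‖ := hN _ (le_trans hm (hψ.id_le m))
        have hρm : ρ (ψ m) = ‖x (ψ m)‖ := max_eq_left hxm
        rw [hv]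
        simp only [norm_smul, norm_inv, Complex.norm_real, Real.norm_eq_abs,
          abs_of_pos (hρpos (ψ m)), hρm]
        have hne : ‖x (ψ m)‖ ≠ 0 := by intro h; rw [h] at hxm; linarith
        rw [abs_of_nonneg (norm_nonneg _)]
        exact inv_mul_cancel₀ hne
      exact Tendsto.congr' (hev.mono fun m hm => hm.symm) tendsto_const_nhds
    exact tendsto_nhds_unique h1 h2
  have hvb_ne : vb ≠ 0 := fun h => by simp [h] at hvbnorm
  -- index set of directions annihilated, and the common zero from hflats
  set I : Finset (Fin (n+1)) := Finset.univ.filter fun i => (∑ j, (A i j : ℂ) * vb j) = 0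
    with hI
  obtain ⟨z₀, hz₀⟩ := hflats I ⟨vb, hvb_ne, fun i hi => (Finset.mem_filter.mp hi).2⟩
  -- star identity
  have hstar : ∀ m, ∑ i, w m i * ℓ z₀ i / ℓ (x m) i = ∑ i, w m i :=
    fun m => star hℓ (w m) (x m) (hxX m) (hxc m) z₀
  -- each term tends to zero
  have hterm0 : ∀ i : Fin (n+1),
      Tendsto (fun m => w (ψ m) i * ℓ z₀ i / ℓ (x (ψ m)) i) atTop (𝓝 0) := by
    intro i
    by_cases hiI : i ∈ I
    · have : (fun m => w (ψ m) i * ℓ z₀ i / ℓ (x (ψ m)) i) = fun _ => 0 := by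
        funext m
        rw [hz₀ i hiI, mul_zero, zero_div]
      rw [this]
      exact tendsto_const_nhds
    · have hci : (∑ j, (A i j : ℂ) * vb j) ≠ 0 := by
        intro h
        exact hiI (Finset.mem_filter.mpr ⟨Finset.mem_univ i, h⟩)
      -- norm of denominators tends to infinity
      have hginf : Tendsto (fun m => ‖ℓ (x (ψ m)) i‖) atTop atTop := by
        have hrep : ∀ m, ℓ (x m) i = (ρ m : ℂ) * (∑ j, (A i j : ℂ) * v m j) + (b i : ℂ) := by
          intro m
          rw [hℓ]
          congr 1
          rw [Finset.mul_sum]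
          refine Finset.sum_congr rfl fun j _ => ?_
          rw [hxv m]
          simp only [Pi.smul_apply, smul_eq_mul]
          ring
        have hglim : Tendsto (fun m => ‖∑ j, (A i j : ℂ) * v (ψ m) j‖) atTop
            (𝓝 ‖∑ j, (A i j : ℂ) * vb j‖) := by
          refine Tendsto.norm ?_
          exact tendsto_finset_sum _ fun j _ =>
            tendsto_const_nhds.mul ((tendsto_pi_nhds.mp hvlim) j)
        have hlow : Tendsto
            (fun m => ρ (ψ m) * ‖∑ j, (A i j : ℂ) * v (ψ m) j‖ - ‖(b i : ℂ)‖)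
            atTop atTop := by
          refine tendsto_atTop_add_const_right _ _ ?_
          exact Tendsto.atTop_mul_pos (norm_pos_iff.mpr hci) (hρtop.comp hψ.tendsto_atTop) hglim
        refine tendsto_atTop_mono (fun m => ?_) hlow
        rw [hrep (ψ m)]
        have h1 : ‖(ρ (ψ m) : ℂ) * (∑ j, (A i j : ℂ) * v (ψ m) j)‖
            = ρ (ψ m) * ‖∑ j, (A i j : ℂ) * v (ψ m) j‖ := by
          rw [norm_mul, Complex.norm_real, Real.norm_eq_abs, abs_of_pos (hρpos (ψ m))]
        calc ρ (ψ m) * ‖∑ j, (A i j : ℂ) * v (ψ m) j‖ - ‖(b i : ℂ)‖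
            ≤ ‖(ρ (ψ m) : ℂ) * (∑ j, (A i j : ℂ) * v (ψ m) j) + (b i : ℂ)‖
              + ‖(b i : ℂ)‖ - ‖(b i : ℂ)‖ := by
              have := norm_le_add_norm_add ((ρ (ψ m) : ℂ) * (∑ j, (A i j : ℂ) * v (ψ m) j))
                ((b i : ℂ))
              rw [h1] at this
              linarith
          _ = ‖(ρ (ψ m) : ℂ) * (∑ j, (A i j : ℂ) * v (ψ m) j) + (b i : ℂ)‖ := by ring
      have hinv : Tendsto (fun m => (ℓ (x (ψ m)) i)⁻¹) atTop (𝓝 0) := by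
        rw [tendsto_zero_iff_norm_tendsto_zero]
        simp only [norm_inv]
        exact Tendsto.inv_tendsto_atTop hginf
      have hnum : Tendsto (fun m => w (ψ m) i * ℓ z₀ i) atTop
          (𝓝 ((u i : ℂ) * ℓ z₀ i)) := by
        exact ((tendsto_pi_nhds.mp (hw.comp hψ.tendsto_atTop)) i).mul tendsto_const_nhds
      have := hnum.mul hinv
      rw [mul_zero] at this
      refine this.congr fun m => ?_
      rw [div_eq_mul_inv]
  -- conclude
  have hLHS : Tendsto (fun m => ∑ i, w (ψ m) i * ℓ z₀ i / ℓ (x (ψ m)) i) atTop (𝓝 0) := by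
    have := tendsto_finset_sum Finset.univ fun i (_ : i ∈ Finset.univ) => hterm0 i
    simpa using this
  have hRHS : Tendsto (fun m => ∑ i, w (ψ m) i) atTop (𝓝 (∑ i, (u i : ℂ))) :=
    tendsto_finset_sum _ fun i _ => (tendsto_pi_nhds.mp (hw.comp hψ.tendsto_atTop)) i
  have heq : (fun m => ∑ i, w (ψ m) i * ℓ z₀ i / ℓ (x (ψ m)) i)
      = fun m => ∑ i, w (ψ m) i := funext fun m => hstar (ψ m)
  rw [heq] at hLHS
  have h0 : (∑ i, (u i : ℂ)) = 0 := tendsto_nhds_unique hRHS hLHS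
  have : ((∑ i, u i : ℝ) : ℂ) = 0 := by push_cast; exact h0
  have hpos : (0:ℝ) < ∑ i, u i :=
    Finset.sum_pos (fun i _ => hu i) Finset.univ_nonempty
  rw [Complex.ofReal_eq_zero] at this
  linarith

lemma escape_bd (hℓ : ∀ x i, ℓ x i = (∑ j, (A i j : ℂ) * x j) + (b i : ℂ))
    (u : Fin (n+1) → ℝ) (hu : ∀ i, 0 < u i)
    (w : ℕ → Fin (n+1) → ℂ) (hw : Tendsto w atTop (𝓝 fun i => (u i : ℂ)))
    (x : ℕ → Fin d → ℂ) (hxX : ∀ m i, ℓ (x m) i ≠ 0)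
    (hxc : ∀ m j, ∑ i, w m i * (A i j : ℂ) / ℓ (x m) i = 0)
    (R : ℝ) (hR : ∀ m, ‖x m‖ ≤ R) (i₀ : Fin (n+1))
    (h0 : Tendsto (fun m => ℓ (x m) i₀) atTop (𝓝 0)) : False := by
  classical
  have hball : ∀ m, x m ∈ Metric.closedBall (0 : Fin d → ℂ) R := by
    intro m
    rw [Metric.mem_closedBall, dist_zero_right]
    exact hR m
  obtain ⟨xb, _, ψ, hψ, hxlim⟩ :=
    (isCompact_closedBall (0 : Fin d → ℂ) R).tendsto_subseq hball
  have hℓlim : ∀ i, Tendsto (fun m => ℓ (x (ψ m)) i) atTop (𝓝 (ℓ xb i)) := fun i =>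
    ((lcont hℓ i).continuousAt.tendsto).comp hxlim
  have hxb0 : ℓ xb i₀ = 0 :=
    tendsto_nhds_unique (hℓlim i₀) (h0.comp hψ.tendsto_atTop)
  -- star identity with z = xb
  have hstar : ∀ m, ∑ i, w m i * ℓ xb i / ℓ (x m) i = ∑ i, w m i :=
    fun m => star hℓ (w m) (x m) (hxX m) (hxc m) xb
  set t : Fin (n+1) → ℂ := fun i => if ℓ xb i = 0 then 0 else (u i : ℂ) with ht
  have hterm : ∀ i : Fin (n+1),
      Tendsto (fun m => w (ψ m) i * ℓ xb i / ℓ (x (ψ m)) i) atTop (𝓝 (t i)) := by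
    intro i
    by_cases hi : ℓ xb i = 0
    · have heq : (fun m => w (ψ m) i * ℓ xb i / ℓ (x (ψ m)) i) = fun _ => 0 := by
        funext m; rw [hi, mul_zero, zero_div]
      rw [heq, ht]
      simp only [hi, if_pos]
      exact tendsto_const_nhds
    · have hnum : Tendsto (fun m => w (ψ m) i * ℓ xb i) atTop (𝓝 ((u i : ℂ) * ℓ xb i)) :=
        ((tendsto_pi_nhds.mp (hw.comp hψ.tendsto_atTop)) i).mul tendsto_const_nhds
      have := hnum.div (hℓlim i) hi
      have hval : (u i : ℂ) * ℓ xb i / ℓ xb i = t i := by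
        rw [mul_div_assoc, div_self hi, mul_one, ht]
        simp only [hi, if_neg, if_false]
      rw [hval] at this
      exact this
  have hLHS : Tendsto (fun m => ∑ i, w (ψ m) i * ℓ xb i / ℓ (x (ψ m)) i) atTop
      (𝓝 (∑ i, t i)) :=
    tendsto_finset_sum _ fun i _ => hterm i
  have hRHS : Tendsto (fun m => ∑ i, w (ψ m) i) atTop (𝓝 (∑ i, (u i : ℂ))) :=
    tendsto_finset_sum _ fun i _ => (tendsto_pi_nhds.mp (hw.comp hψ.tendsto_atTop)) i
  have heq : (fun m => ∑ i, w (ψ m) i * ℓ xb i / ℓ (x (ψ m)) i)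
      = fun m => ∑ i, w (ψ m) i := funext fun m => hstar (ψ m)
  rw [heq] at hLHS
  have hsum_eq : (∑ i, t i) = ∑ i, (u i : ℂ) := tendsto_nhds_unique hLHS hRHS
  -- contradiction via positivity
  have hdiff : ∑ i, ((u i : ℂ) - t i) = 0 := by
    rw [Finset.sum_sub_distrib, hsum_eq, sub_self]
  have hre : ∑ i, (if ℓ xb i = 0 then u i else 0) = (0:ℝ) := by
    have : ((∑ i, (if ℓ xb i = 0 then u i else 0) : ℝ) : ℂ)
        = ∑ i, ((u i : ℂ) - t i) := by
      push_cast
      refine Finset.sum_congr rfl fun i _ => ?_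
      rw [ht]
      by_cases hi : ℓ xb i = 0 <;> simp [hi]
    rw [hdiff] at this
    exact_mod_cast this
  have hge : u i₀ ≤ ∑ i, (if ℓ xb i = 0 then u i else 0) := by
    have h1 : (if ℓ xb i₀ = 0 then u i₀ else 0) = u i₀ := if_pos hxb0
    rw [← h1]
    refine Finset.single_le_sum (f := fun i => if ℓ xb i = 0 then u i else 0) (fun i _ => ?_) (Finset.mem_univ i₀)
    by_cases hi : ℓ xb i = 0 <;> simp [hi, (hu i).le]
  rw [hre] at hge
  exact absurd hge (not_le.mpr (hu i₀))

lemma unbdd_subseq (g : ℕ → ℝ) (h : ∀ R₀ : ℝ, ∃ m, R₀ < g m) :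
    ∃ φ : ℕ → ℕ, StrictMono φ ∧ Tendsto (fun k => g (φ k)) atTop atTop := by
  have hfreq : ∀ nn : ℕ, ∃ᶠ k in atTop, (nn : ℝ) < g k := by
    intro nn
    rw [Filter.frequently_atTop]
    intro N
    obtain ⟨m, hm⟩ := h ((nn : ℝ) + ∑ j ∈ Finset.range N, |g j|)
    have hsum_nonneg : (0:ℝ) ≤ ∑ j ∈ Finset.range N, |g j| :=
      Finset.sum_nonneg fun j _ => abs_nonneg _
    refine ⟨m, ?_, ?_⟩
    · by_contra hmN
      push_neg at hmN
      have h1 : g m ≤ |g m| := le_abs_self _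
      have h2 : |g m| ≤ ∑ j ∈ Finset.range N, |g j| :=
        Finset.single_le_sum (f := fun j => |g j|) (fun j _ => abs_nonneg _)
          (Finset.mem_range.mpr hmN)
      have : (0:ℝ) ≤ (nn:ℝ) := Nat.cast_nonneg nn
      linarith
    · have : (0:ℝ) ≤ ∑ j ∈ Finset.range N, |g j| := hsum_nonneg
      linarith
  obtain ⟨φ, hφ, hP⟩ := Filter.extraction_forall_of_frequently hfreq
  refine ⟨φ, hφ, ?_⟩
  refine tendsto_atTop_mono (fun k => (hP k).le) ?_
  exact tendsto_natCast_atTop_atTop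

lemma bound_lemma (hℓ : ∀ x i, ℓ x i = (∑ j, (A i j : ℂ) * x j) + (b i : ℂ))
    (hflats : ∀ I : Finset (Fin (n+1)),
      (∃ v : Fin d → ℂ, v ≠ 0 ∧ ∀ i ∈ I, ∑ j, (A i j : ℂ) * v j = 0) →
      ∃ x : Fin d → ℂ, ∀ i ∈ I, ℓ x i = 0)
    (u : Fin (n+1) → ℝ) (hu : ∀ i, 0 < u i) :
    ∃ ε > (0:ℝ), ∃ δ > (0:ℝ), ∃ R : ℝ, ∀ u' : Fin (n+1) → ℂ,
      dist u' (fun i => (u i : ℂ)) < ε → ∀ x : Fin d → ℂ, (∀ i, ℓ x i ≠ 0) →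
      (∀ j, ∑ i, u' i * (A i j : ℂ) / ℓ x i = 0) →
      ‖x‖ ≤ R ∧ ∀ i, δ ≤ ‖ℓ x i‖ := by
  classical
  by_contra hcon
  push_neg at hcon
  have hsel : ∀ m : ℕ, ∃ u' : Fin (n+1) → ℂ, dist u' (fun i => (u i : ℂ)) < 1/(m+1) ∧
      ∃ x : Fin d → ℂ, (∀ i, ℓ x i ≠ 0) ∧ (∀ j, ∑ i, u' i * (A i j : ℂ) / ℓ x i = 0) ∧
        (‖x‖ ≤ (m:ℝ) → ∃ i, ‖ℓ x i‖ < 1/(m+1)) := by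
    intro m
    obtain ⟨u', hu1, x, hx1, hx2, hx3⟩ :=
      hcon (1/(m+1)) (by positivity) (1/(m+1)) (by positivity) m
    exact ⟨u', hu1, x, hx1, hx2, hx3⟩
  choose w hwd x hxX hxc hxbad using hsel
  have hwlim : Tendsto w atTop (𝓝 fun i => (u i : ℂ)) := by
    rw [tendsto_iff_dist_tendsto_zero]
    refine squeeze_zero (fun m => dist_nonneg) (fun m => (hwd m).le) ?_
    exact tendsto_one_div_add_atTop_nhds_zero_nat
  by_cases hbdd : ∃ R₀ : ℝ, ∀ m, ‖x m‖ ≤ R₀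
  · obtain ⟨R₀, hR₀⟩ := hbdd
    -- some coordinate gets small infinitely often
    have hinf : ∃ i₀ : Fin (n+1), {m : ℕ | ‖ℓ (x m) i₀‖ < 1/(m+1)}.Infinite := by
      by_contra hfin
      push_neg at hfin
      have hT : (⋃ i, {m : ℕ | ‖ℓ (x m) i‖ < 1/(m+1)}).Finite :=
        Set.finite_iUnion hfin
      obtain ⟨M, hM⟩ := hT.bddAbove
      set m₀ : ℕ := max (M+1) ⌈R₀⌉₊ with hm₀
      have hm₀T : m₀ ∉ ⋃ i, {m : ℕ | ‖ℓ (x m) i‖ < 1/(m+1)} := by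
        intro hmem
        have h1 := hM hmem
        have h2 : M + 1 ≤ m₀ := le_max_left _ _
        omega
      have hxm₀ : ‖x m₀‖ ≤ (m₀ : ℝ) := by
        refine le_trans (hR₀ m₀) ?_
        calc R₀ ≤ (⌈R₀⌉₊ : ℝ) := Nat.le_ceil R₀
          _ ≤ (m₀ : ℝ) := by exact_mod_cast le_max_right (M+1) ⌈R₀⌉₊
      obtain ⟨i, hi⟩ := hxbad m₀ hxm₀
      exact hm₀T (Set.mem_iUnion.mpr ⟨i, hi⟩)
    obtain ⟨i₀, hi₀⟩ := hinf
    obtain ⟨φ, hφ, hφP⟩ := Filter.extraction_of_frequently_atTop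
      (Nat.frequently_atTop_iff_infinite.mpr hi₀)
    have h0 : Tendsto (fun k => ℓ (x (φ k)) i₀) atTop (𝓝 0) := by
      rw [tendsto_zero_iff_norm_tendsto_zero]
      refine squeeze_zero (fun k => norm_nonneg _) (fun k => ?_)
        tendsto_one_div_add_atTop_nhds_zero_nat
      have h1 : ‖ℓ (x (φ k)) i₀‖ < 1/(φ k + 1) := hφP k
      have h2 : (1:ℝ)/(φ k + 1) ≤ 1/(k+1) := by
        apply one_div_le_one_div_of_le
        · positivity
        · have hk : (k:ℝ) ≤ (φ k : ℝ) := by exact_mod_cast hφ.id_le k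
          linarith
      linarith
    exact escape_bd hℓ u hu (fun k => w (φ k)) (hwlim.comp hφ.tendsto_atTop)
      (fun k => x (φ k)) (fun k => hxX (φ k)) (fun k => hxc (φ k)) R₀
      (fun k => hR₀ (φ k)) i₀ h0
  · push_neg at hbdd
    obtain ⟨φ, hφ, htop⟩ := unbdd_subseq (fun m => ‖x m‖) fun R₀ => by
      obtain ⟨m, hm⟩ := hbdd R₀
      exact ⟨m, hm⟩
    exact escape_inf hℓ hflats u hu (fun k => w (φ k)) (hwlim.comp hφ.tendsto_atTop)
      (fun k => x (φ k)) (fun k => hxX (φ k)) (fun k => hxc (φ k)) htop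

lemma crit_limit (hℓ : ∀ x i, ℓ x i = (∑ j, (A i j : ℂ) * x j) + (b i : ℂ))
    (w : ℕ → Fin (n+1) → ℂ) (u' : Fin (n+1) → ℂ) (hw : Tendsto w atTop (𝓝 u'))
    (y : ℕ → Fin d → ℂ) (xb : Fin d → ℂ) (hy : Tendsto y atTop (𝓝 xb))
    (hyc : ∀ m j, ∑ i, w m i * (A i j : ℂ) / ℓ (y m) i = 0)
    (hxb : ∀ i, ℓ xb i ≠ 0) :
    ∀ j, ∑ i, u' i * (A i j : ℂ) / ℓ xb i = 0 := by
  intro j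
  have hterm : ∀ i : Fin (n+1), Tendsto (fun m => w m i * (A i j : ℂ) / ℓ (y m) i) atTop
      (𝓝 (u' i * (A i j : ℂ) / ℓ xb i)) := by
    intro i
    refine Tendsto.div ?_ (((lcont hℓ i).continuousAt.tendsto).comp hy) (hxb i)
    exact ((tendsto_pi_nhds.mp hw) i).mul tendsto_const_nhds
  have hsum := tendsto_finset_sum Finset.univ fun i (_ : i ∈ Finset.univ) => hterm i
  have heq : (fun m => ∑ i, w m i * (A i j : ℂ) / ℓ (y m) i) = fun _ => (0:ℂ) :=
    funext fun m => hyc m j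
  rw [heq] at hsum
  exact (tendsto_nhds_unique hsum tendsto_const_nhds)

lemma deg_of_infinite (hℓ : ∀ x i, ℓ x i = (∑ j, (A i j : ℂ) * x j) + (b i : ℂ))
    (u' : Fin (n+1) → ℂ) (S : Set (Fin d → ℂ))
    (hS : ∀ x ∈ S, (∀ i, ℓ x i ≠ 0) ∧ ∀ j, ∑ i, u' i * (A i j : ℂ) / ℓ x i = 0)
    (hSinf : S.Infinite) (R δ : ℝ) (hδ : 0 < δ)
    (hb : ∀ x ∈ S, ‖x‖ ≤ R ∧ ∀ i, δ ≤ ‖ℓ x i‖) :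
    ∃ x₀, (∀ i, ℓ x₀ i ≠ 0) ∧ (∀ j, ∑ i, u' i * (A i j : ℂ) / ℓ x₀ i = 0) ∧
      (Matrix.of fun j k : Fin d => ∑ i, u' i * (A i j : ℂ) * (A i k : ℂ) / (ℓ x₀ i)^2).det
        = 0 := by
  classical
  set e := hSinf.natEmbedding with he
  set y : ℕ → Fin d → ℂ := fun m => (e m : Fin d → ℂ) with hy
  have hyS : ∀ m, y m ∈ S := fun m => (e m).2
  have hball : ∀ m, y m ∈ Metric.closedBall (0 : Fin d → ℂ) R := by
    intro m
    rw [Metric.mem_closedBall, dist_zero_right]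
    exact (hb _ (hyS m)).1
  obtain ⟨xb, _, ψ, hψ, hxlim⟩ :=
    (isCompact_closedBall (0 : Fin d → ℂ) R).tendsto_subseq hball
  have hℓlim : ∀ i, Tendsto (fun m => ℓ (y (ψ m)) i) atTop (𝓝 (ℓ xb i)) := fun i =>
    ((lcont hℓ i).continuousAt.tendsto).comp hxlim
  have hxbX : ∀ i, ℓ xb i ≠ 0 := by
    intro i
    have hge : δ ≤ ‖ℓ xb i‖ := by
      refine ge_of_tendsto ((hℓlim i).norm) ?_
      exact Eventually.of_forall fun m => (hb _ (hyS (ψ m))).2 i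
    intro h
    rw [h, norm_zero] at hge
    linarith
  have hxbc : ∀ j, ∑ i, u' i * (A i j : ℂ) / ℓ xb i = 0 :=
    crit_limit hℓ (fun _ => u') u' tendsto_const_nhds (fun m => y (ψ m)) xb hxlim
      (fun m j => (hS _ (hyS (ψ m))).2 j) hxbX
  -- build a sequence of points of S distinct from xb converging to xb
  have hyinj : Function.Injective fun m => y (ψ m) := by
    intro a a' haa
    have : e (ψ a) = e (ψ a') := Subtype.ext haa
    exact hψ.injective (e.injective this)
  have hzseq : ∃ z : ℕ → Fin d → ℂ, (∀ m, z m ∈ S) ∧ (∀ m, z m ≠ xb) ∧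
      Tendsto z atTop (𝓝 xb) := by
    by_cases hex : ∃ m₀, y (ψ m₀) = xb
    · obtain ⟨m₀, hm₀⟩ := hex
      refine ⟨fun m => y (ψ (m + (m₀ + 1))), fun m => hyS _, fun m heq2 => ?_, ?_⟩
      · have h3 : (fun m => y (ψ m)) (m + (m₀ + 1)) = (fun m => y (ψ m)) m₀ := by
          show y (ψ (m + (m₀ + 1))) = y (ψ m₀)
          rw [show y (ψ (m + (m₀ + 1))) = xb from heq2, hm₀]
        have := hyinj h3
        omega
      · exact hxlim.comp (tendsto_add_atTop_nat (m₀ + 1))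
    · push_neg at hex
      exact ⟨fun m => y (ψ m), fun m => hyS _, hex, hxlim⟩
  obtain ⟨z, hzS, hzne, hzlim⟩ := hzseq
  refine ⟨xb, hxbX, hxbc, ?_⟩
  exact acc_degenerate hℓ u' xb hxbX hxbc z (fun m => (hS _ (hzS m)).1)
    (fun m => (hS _ (hzS m)).2) hzne hzlim

end aux

/-- Corollary 4.2: for a real essential arrangement with no flats at infinity such
that for every positive `u` the critical set consists of exactly `r = (-1)^d χ(X)`
reduced (nondegenerate) points, the logarithmic discriminant (the closure of the set
of `u` with infinite or non-reduced critical locus) contains no point of the open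
positive orthant. -/
theorem stmt_12 (d n r : ℕ)
    (A : Matrix (Fin (n+1)) (Fin d) ℝ) (b : Fin (n+1) → ℝ)
    (ℓ : (Fin d → ℂ) → Fin (n+1) → ℂ)
    (hℓ : ∀ x i, ℓ x i = (∑ j, (A i j : ℂ) * x j) + (b i : ℂ))
    (X : Set (Fin d → ℂ))
    (hX : X = {x | ∀ i, ℓ x i ≠ 0})
    (Crit : (Fin (n+1) → ℂ) → Set (Fin d → ℂ))
    (hCrit : ∀ u, Crit u = {x ∈ X | ∀ j, ∑ i, u i * (A i j : ℂ) / ℓ x i = 0})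
    (Hess : (Fin (n+1) → ℂ) → (Fin d → ℂ) → ℂ)
    (hHess : ∀ u x, Hess u x =
      (Matrix.of fun j k : Fin d => ∑ i, u i * (A i j : ℂ) * (A i k : ℂ) / (ℓ x i)^2).det)
    -- essentiality: the matrix `[b | A]` has full rank `d+1`
    (hessential : (Matrix.of fun (i : Fin (n+1)) (j : Fin (d+1)) =>
      Fin.cons (b i) (fun k => A i k) j).rank = d + 1)
    -- no flats at infinity
    (hflats : ∀ I : Finset (Fin (n+1)),
      (∃ v : Fin d → ℂ, v ≠ 0 ∧ ∀ i ∈ I, ∑ j, (A i j : ℂ) * v j = 0) →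
      ∃ x : Fin d → ℂ, ∀ i ∈ I, ℓ x i = 0)
    -- for every positive real `u`, the critical set consists of `r` reduced points
    (hVarchenko : ∀ u : Fin (n+1) → ℝ, (∀ i, 0 < u i) →
      (Crit fun i => (u i : ℂ)).Finite ∧ (Crit fun i => (u i : ℂ)).ncard = r ∧
        ∀ x ∈ Crit fun i => (u i : ℂ), Hess (fun i => (u i : ℂ)) x ≠ 0) :
    ∀ u : Fin (n+1) → ℝ, (∀ i, 0 < u i) →
      (fun i => (u i : ℂ)) ∉
        closure {u' : Fin (n+1) → ℂ |
          (Crit u').Infinite ∨ ∃ x ∈ Crit u', Hess u' x = 0} := by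
  classical
  intro u hu hmem
  rw [mem_closure_iff_seq_limit] at hmem
  obtain ⟨v, hvmem, hvlim⟩ := hmem
  obtain ⟨ε, hε, δ, hδ, R, hbnd⟩ := bound_lemma hℓ hflats u hu
  have hCritmem : ∀ (u' : Fin (n+1) → ℂ) (x : Fin d → ℂ), x ∈ Crit u' ↔
      (∀ i, ℓ x i ≠ 0) ∧ (∀ j, ∑ i, u' i * (A i j : ℂ) / ℓ x i = 0) := by
    intro u' x
    rw [hCrit, hX]
    simp only [Set.mem_setOf_eq, Set.mem_sep_iff]
  obtain ⟨N, hN⟩ := Metric.tendsto_atTop.mp hvlim ε hε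
  have hdegen : ∀ k : ℕ, ∃ x₀, x₀ ∈ Crit (v (k+N)) ∧ Hess (v (k+N)) x₀ = 0 := by
    intro k
    have hclose : dist (v (k+N)) (fun i => (u i : ℂ)) < ε := hN _ (Nat.le_add_left N k)
    rcases hvmem (k+N) with hinf | hdeg
    · obtain ⟨x₀, h1, h2, h3⟩ := deg_of_infinite hℓ (v (k+N)) (Crit (v (k+N)))
        (fun x hx => (hCritmem _ x).mp hx) hinf R δ hδ
        (fun x hx => hbnd _ hclose x ((hCritmem _ x).mp hx).1 ((hCritmem _ x).mp hx).2)
      exact ⟨x₀, (hCritmem _ x₀).mpr ⟨h1, h2⟩, by rw [hHess]; exact h3⟩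
    · exact hdeg
  choose xx hxxC hxxH using hdegen
  have hwk : Tendsto (fun k => v (k + N)) atTop (𝓝 fun i => (u i : ℂ)) :=
    hvlim.comp (tendsto_add_atTop_nat N)
  have hxxcond : ∀ k, (∀ i, ℓ (xx k) i ≠ 0) ∧
      (∀ j, ∑ i, v (k+N) i * (A i j : ℂ) / ℓ (xx k) i = 0) :=
    fun k => (hCritmem _ _).mp (hxxC k)
  have hxxb : ∀ k, ‖xx k‖ ≤ R ∧ ∀ i, δ ≤ ‖ℓ (xx k) i‖ :=
    fun k => hbnd _ (hN _ (Nat.le_add_left N k)) _ (hxxcond k).1 (hxxcond k).2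
  obtain ⟨xb, _, ψ, hψ, hxlim⟩ :=
    (isCompact_closedBall (0 : Fin d → ℂ) R).tendsto_subseq (x := xx) (fun k => by
      rw [Metric.mem_closedBall, dist_zero_right]; exact (hxxb k).1)
  have hℓlim : ∀ i, Tendsto (fun k => ℓ (xx (ψ k)) i) atTop (𝓝 (ℓ xb i)) := fun i =>
    ((lcont hℓ i).continuousAt.tendsto).comp hxlim
  have hxbX : ∀ i, ℓ xb i ≠ 0 := by
    intro i
    have hge : δ ≤ ‖ℓ xb i‖ := by
      refine ge_of_tendsto ((hℓlim i).norm) ?_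
      exact Eventually.of_forall fun k => (hxxb (ψ k)).2 i
    intro h
    rw [h, norm_zero] at hge
    linarith
  have hxbc : ∀ j, ∑ i, (u i : ℂ) * (A i j : ℂ) / ℓ xb i = 0 :=
    crit_limit hℓ (fun k => v (ψ k + N)) (fun i => (u i : ℂ))
      (hwk.comp hψ.tendsto_atTop) (fun k => xx (ψ k)) xb hxlim
      (fun k j => (hxxcond (ψ k)).2 j) hxbX
  have hxbCrit : xb ∈ Crit fun i => (u i : ℂ) := (hCritmem _ xb).mpr ⟨hxbX, hxbc⟩
  -- limit of Hessians
  have hM : Tendsto (fun k => (Matrix.of fun j kk : Fin d =>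
      ∑ i, v (ψ k + N) i * (A i j : ℂ) * (A i kk : ℂ) / (ℓ (xx (ψ k)) i)^2)) atTop
      (𝓝 (Matrix.of fun j kk : Fin d =>
        ∑ i, (u i : ℂ) * (A i j : ℂ) * (A i kk : ℂ) / (ℓ xb i)^2)) := by
    apply tendsto_pi_nhds.mpr
    intro j
    rw [tendsto_pi_nhds]
    intro kk
    simp only [Matrix.of_apply]
    refine tendsto_finset_sum _ fun i _ => ?_
    refine Tendsto.div ?_ ((hℓlim i).pow 2) (pow_ne_zero 2 (hxbX i))
    exact (((tendsto_pi_nhds.mp (hwk.comp hψ.tendsto_atTop)) i).mul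
      tendsto_const_nhds).mul tendsto_const_nhds
  have hdet : Tendsto (fun k => (Matrix.of fun j kk : Fin d =>
      ∑ i, v (ψ k + N) i * (A i j : ℂ) * (A i kk : ℂ) / (ℓ (xx (ψ k)) i)^2).det) atTop
      (𝓝 ((Matrix.of fun j kk : Fin d =>
        ∑ i, (u i : ℂ) * (A i j : ℂ) * (A i kk : ℂ) / (ℓ xb i)^2).det)) :=
    ((Continuous.matrix_det continuous_id).tendsto _).comp hM
  have hzero : (fun k => (Matrix.of fun j kk : Fin d =>
      ∑ i, v (ψ k + N) i * (A i j : ℂ) * (A i kk : ℂ) / (ℓ (xx (ψ k)) i)^2).det)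
      = fun _ => (0:ℂ) := by
    funext k
    rw [← hHess]
    exact hxxH (ψ k)
  rw [hzero] at hdet
  have hfin : Hess (fun i => (u i : ℂ)) xb = 0 := by
    rw [hHess]
    exact tendsto_nhds_unique hdet tendsto_const_nhds
  exact (hVarchenko u hu).2.2 xb hxbCrit hfin
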